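/- For β_x, β_y > 0, a point z is a saddle point of the convex-concave function (x,y) ↦ f(x) + ⟨Ax,y⟩ - g*(y) if and only if G_β(z) = 0. -/
import Mathlib


open RealInnerProductSpace

/-- `ℝᵏ` with the Euclidean structure. -/
abbrev Eu (k : ℕ) := EuclideanSpace ℝ (Fin k)

lemma aux_nonpos (D C : ℝ) (hC : 0 ≤ C)
    (h : ∀ t : ℝ, 0 < t → t ≤ 1 → t * D ≤ C * t ^ 2) : D ≤ 0 := by
  by_contra hD
  push_neg at hD
  have hC1 : 0 < C + 1 := by linarith
  set t := min 1 (D / (2 * (C + 1))) with ht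
  have ht0 : 0 < t := lt_min one_pos (by positivity)
  have ht1 : t ≤ 1 := min_le_left _ _
  have h2 : t ≤ D / (2 * (C + 1)) := min_le_right _ _
  have h3 : t * (2 * (C + 1)) ≤ D := by
    rw [le_div_iff₀ (by positivity)] at h2
    exact h2
  have := h t ht0 ht1
  nlinarith [mul_pos ht0 hD, sq_nonneg t, mul_le_mul_of_nonneg_left ht1 (le_of_lt ht0)]

/-- For `β_x, β_y > 0`, a point `z = (x,y)` is a saddle point of
`(x,y) ↦ f(x) + ⟨Ax, y⟫ - g*(y)` if and only if the self-centered smoothed gap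
`G_β(z) = sup_{z'} [F(z) - F(z') + ⟨Mz, z'⟩ - ½‖z - z'‖²_β]` vanishes. -/
theorem saddle_iff_smoothed_gap_eq_zero {n m : ℕ}
    (f : Eu n → ℝ) (g : Eu m → ℝ)
    (hf : ConvexOn ℝ Set.univ f) (hg : ConvexOn ℝ Set.univ g)
    (hflsc : LowerSemicontinuous f) (hglsc : LowerSemicontinuous g)
    (A : Eu n →L[ℝ] Eu m)
    (βx βy : ℝ) (hβx : 0 < βx) (hβy : 0 < βy)
    (hsaddle : ∃ xs : Eu n, ∃ ys : Eu m, ∀ (x' : Eu n) (y' : Eu m),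
      f xs + ⟪A xs, y'⟫ - g y' ≤ f xs + ⟪A xs, ys⟫ - g ys ∧
      f xs + ⟪A xs, ys⟫ - g ys ≤ f x' + ⟪A x', ys⟫ - g ys)
    (x : Eu n) (y : Eu m)
    (hbdd : BddAbove (Set.range (fun z' : Eu n × Eu m =>
      (f x + g y) - (f z'.1 + g z'.2)
        + (⟪-((ContinuousLinearMap.adjoint A) y), z'.1⟫ + ⟪A x, z'.2⟫)
        - βx / 2 * ‖x - z'.1‖ ^ 2 - βy / 2 * ‖y - z'.2‖ ^ 2))) :
    (∀ (x' : Eu n) (y' : Eu m),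
        f x + ⟪A x, y'⟫ - g y' ≤ f x + ⟪A x, y⟫ - g y ∧
        f x + ⟪A x, y⟫ - g y ≤ f x' + ⟪A x', y⟫ - g y) ↔
      (⨆ z' : Eu n × Eu m,
        ((f x + g y) - (f z'.1 + g z'.2)
          + (⟪-((ContinuousLinearMap.adjoint A) y), z'.1⟫ + ⟪A x, z'.2⟫)
          - βx / 2 * ‖x - z'.1‖ ^ 2 - βy / 2 * ‖y - z'.2‖ ^ 2)) = 0 := by
  have hadj : ∀ (u : Eu n), ⟪-((ContinuousLinearMap.adjoint A) y), u⟫ = -⟪A u, y⟫ := by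
    intro u
    rw [inner_neg_left, ContinuousLinearMap.adjoint_inner_left, real_inner_comm]
  set S : Eu n × Eu m → ℝ := fun z' =>
    (f x + g y) - (f z'.1 + g z'.2)
      + (⟪-((ContinuousLinearMap.adjoint A) y), z'.1⟫ + ⟪A x, z'.2⟫)
      - βx / 2 * ‖x - z'.1‖ ^ 2 - βy / 2 * ‖y - z'.2‖ ^ 2 with hSdef
  have hSval : ∀ z' : Eu n × Eu m, S z' =
      (f x + g y) - (f z'.1 + g z'.2) + (-⟪A z'.1, y⟫ + ⟪A x, z'.2⟫)
        - βx / 2 * ‖x - z'.1‖ ^ 2 - βy / 2 * ‖y - z'.2‖ ^ 2 := by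
    intro z'
    simp only [hSdef, hadj]
  have hS0 : S (x, y) = 0 := by
    rw [hSval]
    simp
  have hsup_nonneg : (0 : ℝ) ≤ ⨆ z', S z' := hS0 ▸ le_ciSup hbdd (x, y)
  constructor
  · intro hsad
    refine le_antisymm (ciSup_le fun z' => ?_) hsup_nonneg
    have h1 := (hsad z'.1 z'.2).1
    have h2 := (hsad z'.1 z'.2).2
    have hq1 : 0 ≤ βx / 2 * ‖x - z'.1‖ ^ 2 := by positivity
    have hq2 : 0 ≤ βy / 2 * ‖y - z'.2‖ ^ 2 := by positivity
    rw [hSval]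
    linarith
  · intro hsup
    have hle : ∀ z' : Eu n × Eu m, S z' ≤ 0 := fun z' => hsup ▸ le_ciSup hbdd z'
    intro x' y'
    constructor
    · -- y-direction
      have hD : (⟪A x, y'⟫ - g y') - (⟪A x, y⟫ - g y) ≤ 0 := by
        apply aux_nonpos _ (βy / 2 * ‖y - y'‖ ^ 2) (by positivity)
        intro t ht0 ht1
        have hkey := hle (x, (1 - t) • y + t • y')
        rw [hSval] at hkey
        simp only at hkey
        have hconv : g ((1 - t) • y + t • y') ≤ (1 - t) * g y + t * g y' :=
          hg.2 (Set.mem_univ y) (Set.mem_univ y') (by linarith) (le_of_lt ht0) (by ring)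
        have hinner : ⟪A x, (1 - t) • y + t • y'⟫ = (1 - t) * ⟪A x, y⟫ + t * ⟪A x, y'⟫ := by
          rw [inner_add_right, real_inner_smul_right, real_inner_smul_right]
        have hnorm : ‖y - ((1 - t) • y + t • y')‖ ^ 2 = t ^ 2 * ‖y - y'‖ ^ 2 := by
          have : y - ((1 - t) • y + t • y') = t • (y - y') := by module
          rw [this, norm_smul, mul_pow]
          simp [abs_of_pos ht0]
        have hnorm0 : ‖(x : Eu n) - x‖ ^ 2 = 0 := by simp
        rw [hinner, hnorm, hnorm0] at hkey
        nlinarith [hkey, hconv]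
      linarith
    · -- x-direction
      have hD : (f x + ⟪A x, y⟫) - (f x' + ⟪A x', y⟫) ≤ 0 := by
        apply aux_nonpos _ (βx / 2 * ‖x - x'‖ ^ 2) (by positivity)
        intro t ht0 ht1
        have hkey := hle ((1 - t) • x + t • x', y)
        rw [hSval] at hkey
        simp only at hkey
        have hconv : f ((1 - t) • x + t • x') ≤ (1 - t) * f x + t * f x' :=
          hf.2 (Set.mem_univ x) (Set.mem_univ x') (by linarith) (le_of_lt ht0) (by ring)
        have hinner : ⟪A ((1 - t) • x + t • x'), y⟫ = (1 - t) * ⟪A x, y⟫ + t * ⟪A x', y⟫ := by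
          rw [map_add, map_smul, map_smul, inner_add_left, real_inner_smul_left,
            real_inner_smul_left]
        have hnorm : ‖x - ((1 - t) • x + t • x')‖ ^ 2 = t ^ 2 * ‖x - x'‖ ^ 2 := by
          have : x - ((1 - t) • x + t • x') = t • (x - x') := by module
          rw [this, norm_smul, mul_pow]
          simp [abs_of_pos ht0]
        have hnorm0 : ‖(y : Eu m) - y‖ ^ 2 = 0 := by simp
        rw [hinner, hnorm, hnorm0] at hkey
        nlinarith [hkey, hconv]
      linarith
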